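/- The Jacobian of the rotational stiffness map Θ ↦ Nᵀ(Θ) K_τ Θ has determinant k_r k_p k_y / cos p, where k_r, k_p, k_y are the diagonal entries of K_τ; hence the Jacobian is invertible on the region |p| < π/2. -/

import Mathlib

open Real Matrix

/-- The gimbal-to-spatial torque conversion matrix of the bushing model. -/
noncomputable def Nmat (p w : ℝ) : Matrix (Fin 3) (Fin 3) ℝ :=
  !![Real.cos w / Real.cos p, Real.sin w / Real.cos p, 0;
     -Real.sin w, Real.cos w, 0;
     Real.cos w * Real.tan p, Real.sin w * Real.tan p, 1]

/-- The rotational stiffness map `Θ ↦ N(Θ)ᵀ K_τ Θ` of the bushing model,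
with `Θ = (r, p, w)` encoded as a function `Fin 3 → ℝ`. -/
noncomputable def rotStiffness (Kτ : Matrix (Fin 3) (Fin 3) ℝ) (Θ : Fin 3 → ℝ) :
    Fin 3 → ℝ :=
  (Nmat (Θ 1) (Θ 2))ᵀ.mulVec (Kτ.mulVec Θ)

/-- Jacobian matrix of the rotational stiffness map. -/
noncomputable def Jm (kr kp ky r p w : ℝ) : Matrix (Fin 3) (Fin 3) ℝ :=
  !![kr * Real.cos w / Real.cos p,
     (kr * r * Real.cos w * Real.sin p + ky * w * Real.cos w) / Real.cos p ^ 2 - kp * Real.sin w,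
     -(kr * r * Real.sin w) / Real.cos p - kp * p * Real.cos w
       + ky * Real.cos w * Real.sin p / Real.cos p - ky * w * Real.sin w * Real.sin p / Real.cos p;
     kr * Real.sin w / Real.cos p,
     (kr * r * Real.sin w * Real.sin p + ky * w * Real.sin w) / Real.cos p ^ 2 + kp * Real.cos w,
     kr * r * Real.cos w / Real.cos p - kp * p * Real.sin w
       + ky * Real.sin w * Real.sin p / Real.cos p + ky * w * Real.cos w * Real.sin p / Real.cos p;
     0, 0, ky]

lemma rot_eq (kr kp ky : ℝ) :
    rotStiffness (Matrix.diagonal ![kr, kp, ky]) = fun Θ =>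
      ![kr * Θ 0 * Real.cos (Θ 2) * (Real.cos (Θ 1))⁻¹ - kp * Θ 1 * Real.sin (Θ 2)
          + ky * Θ 2 * Real.cos (Θ 2) * Real.sin (Θ 1) * (Real.cos (Θ 1))⁻¹,
        kr * Θ 0 * Real.sin (Θ 2) * (Real.cos (Θ 1))⁻¹ + kp * Θ 1 * Real.cos (Θ 2)
          + ky * Θ 2 * Real.sin (Θ 2) * Real.sin (Θ 1) * (Real.cos (Θ 1))⁻¹,
        ky * Θ 2] := by
  funext Θ i
  fin_cases i <;>
    simp [rotStiffness, Nmat, Matrix.mulVec, dotProduct, Fin.sum_univ_three,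
      Matrix.diagonal, Real.tan_eq_sin_div_cos, div_eq_mul_inv] <;> ring

set_option maxHeartbeats 1000000 in
lemma rot_hasFDerivAt (kr kp ky : ℝ) (Θ : Fin 3 → ℝ) (hc : Real.cos (Θ 1) ≠ 0) :
    HasFDerivAt (rotStiffness (Matrix.diagonal ![kr, kp, ky]))
      (LinearMap.toContinuousLinearMap
        (Matrix.toLin' (Jm kr kp ky (Θ 0) (Θ 1) (Θ 2)))) Θ := by
  have h0 : HasFDerivAt (fun Θ : Fin 3 → ℝ => Θ 0)
      (ContinuousLinearMap.proj (R := ℝ) (φ := fun _ : Fin 3 => ℝ) 0) Θ :=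
    (ContinuousLinearMap.proj (R := ℝ) (φ := fun _ : Fin 3 => ℝ) 0).hasFDerivAt
  have h1 : HasFDerivAt (fun Θ : Fin 3 → ℝ => Θ 1)
      (ContinuousLinearMap.proj (R := ℝ) (φ := fun _ : Fin 3 => ℝ) 1) Θ :=
    (ContinuousLinearMap.proj (R := ℝ) (φ := fun _ : Fin 3 => ℝ) 1).hasFDerivAt
  have h2 : HasFDerivAt (fun Θ : Fin 3 → ℝ => Θ 2)
      (ContinuousLinearMap.proj (R := ℝ) (φ := fun _ : Fin 3 => ℝ) 2) Θ :=
    (ContinuousLinearMap.proj (R := ℝ) (φ := fun _ : Fin 3 => ℝ) 2).hasFDerivAt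
  have hcw : HasFDerivAt (fun Θ : Fin 3 → ℝ => Real.cos (Θ 2)) _ Θ :=
    ((Real.hasDerivAt_cos (Θ 2)).comp_hasFDerivAt Θ h2 :)
  have hsw : HasFDerivAt (fun Θ : Fin 3 → ℝ => Real.sin (Θ 2)) _ Θ :=
    ((Real.hasDerivAt_sin (Θ 2)).comp_hasFDerivAt Θ h2 :)
  have hsp : HasFDerivAt (fun Θ : Fin 3 → ℝ => Real.sin (Θ 1)) _ Θ :=
    ((Real.hasDerivAt_sin (Θ 1)).comp_hasFDerivAt Θ h1 :)
  have hcp : HasFDerivAt (fun Θ : Fin 3 → ℝ => Real.cos (Θ 1)) _ Θ :=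
    ((Real.hasDerivAt_cos (Θ 1)).comp_hasFDerivAt Θ h1 :)
  have hicp : HasFDerivAt (fun Θ : Fin 3 → ℝ => (Real.cos (Θ 1))⁻¹) _ Θ :=
    ((hasDerivAt_inv hc).comp_hasFDerivAt Θ hcp :)
  rw [rot_eq]
  apply hasFDerivAt_pi'.2
  intro i
  fin_cases i
  · have h := ((((h0.const_mul kr).mul hcw).mul hicp).sub ((h1.const_mul kp).mul hsw)).add
      ((((h2.const_mul ky).mul hcw).mul hsp).mul hicp)
    have heq : (fun Θ : Fin 3 → ℝ =>
        ![kr * Θ 0 * Real.cos (Θ 2) * (Real.cos (Θ 1))⁻¹ - kp * Θ 1 * Real.sin (Θ 2)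
            + ky * Θ 2 * Real.cos (Θ 2) * Real.sin (Θ 1) * (Real.cos (Θ 1))⁻¹,
          kr * Θ 0 * Real.sin (Θ 2) * (Real.cos (Θ 1))⁻¹ + kp * Θ 1 * Real.cos (Θ 2)
            + ky * Θ 2 * Real.sin (Θ 2) * Real.sin (Θ 1) * (Real.cos (Θ 1))⁻¹,
          ky * Θ 2] (0 : Fin 3)) = fun Θ : Fin 3 → ℝ =>
        kr * Θ 0 * Real.cos (Θ 2) * (Real.cos (Θ 1))⁻¹ - kp * Θ 1 * Real.sin (Θ 2)
          + ky * Θ 2 * Real.cos (Θ 2) * Real.sin (Θ 1) * (Real.cos (Θ 1))⁻¹ := by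
      funext Θ; simp
    rw [show (⟨0, by norm_num⟩ : Fin 3) = (0 : Fin 3) from rfl, heq]
    refine h.congr_fderiv (Eq.symm ?_)
    refine ContinuousLinearMap.ext fun v => ?_
    simp [Jm, Matrix.toLin'_apply, Matrix.mulVec, dotProduct, Fin.sum_univ_three,
      smul_eq_mul]
    field_simp
    ring_nf
    simp only [Real.sin_sq]
    ring
  · have h := ((((h0.const_mul kr).mul hsw).mul hicp).add ((h1.const_mul kp).mul hcw)).add
      ((((h2.const_mul ky).mul hsw).mul hsp).mul hicp)
    have heq : (fun Θ : Fin 3 → ℝ =>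
        ![kr * Θ 0 * Real.cos (Θ 2) * (Real.cos (Θ 1))⁻¹ - kp * Θ 1 * Real.sin (Θ 2)
            + ky * Θ 2 * Real.cos (Θ 2) * Real.sin (Θ 1) * (Real.cos (Θ 1))⁻¹,
          kr * Θ 0 * Real.sin (Θ 2) * (Real.cos (Θ 1))⁻¹ + kp * Θ 1 * Real.cos (Θ 2)
            + ky * Θ 2 * Real.sin (Θ 2) * Real.sin (Θ 1) * (Real.cos (Θ 1))⁻¹,
          ky * Θ 2] (1 : Fin 3)) = fun Θ : Fin 3 → ℝ =>
        kr * Θ 0 * Real.sin (Θ 2) * (Real.cos (Θ 1))⁻¹ + kp * Θ 1 * Real.cos (Θ 2)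
          + ky * Θ 2 * Real.sin (Θ 2) * Real.sin (Θ 1) * (Real.cos (Θ 1))⁻¹ := by
      funext Θ; simp
    rw [show (⟨1, by norm_num⟩ : Fin 3) = (1 : Fin 3) from rfl, heq]
    refine h.congr_fderiv (Eq.symm ?_)
    refine ContinuousLinearMap.ext fun v => ?_
    simp [Jm, Matrix.toLin'_apply, Matrix.mulVec, dotProduct, Fin.sum_univ_three,
      smul_eq_mul]
    field_simp
    ring_nf
    simp only [Real.sin_sq]
    ring
  · have h := h2.const_mul ky
    have heq : (fun Θ : Fin 3 → ℝ =>
        ![kr * Θ 0 * Real.cos (Θ 2) * (Real.cos (Θ 1))⁻¹ - kp * Θ 1 * Real.sin (Θ 2)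
            + ky * Θ 2 * Real.cos (Θ 2) * Real.sin (Θ 1) * (Real.cos (Θ 1))⁻¹,
          kr * Θ 0 * Real.sin (Θ 2) * (Real.cos (Θ 1))⁻¹ + kp * Θ 1 * Real.cos (Θ 2)
            + ky * Θ 2 * Real.sin (Θ 2) * Real.sin (Θ 1) * (Real.cos (Θ 1))⁻¹,
          ky * Θ 2] (2 : Fin 3)) = fun Θ : Fin 3 → ℝ => ky * Θ 2 := by
      funext Θ; simp
    rw [show (⟨2, by norm_num⟩ : Fin 3) = (2 : Fin 3) from rfl, heq]
    refine h.congr_fderiv (Eq.symm ?_)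
    refine ContinuousLinearMap.ext fun v => ?_
    simp [Jm, Matrix.toLin'_apply, Matrix.mulVec, dotProduct, Fin.sum_univ_three,
      smul_eq_mul]

/-- The Jacobian of the rotational stiffness map has determinant
`k_r k_p k_y / cos p`, hence is invertible on `|p| < π/2`. -/
theorem rotStiffness_jacobian_det (kr kp ky : ℝ)
    (hkr : 0 < kr) (hkp : 0 < kp) (hky : 0 < ky)
    (Θ : Fin 3 → ℝ) (hp : |Θ 1| < Real.pi / 2) :
    LinearMap.det
        ((fderiv ℝ (rotStiffness (Matrix.diagonal ![kr, kp, ky])) Θ :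
          (Fin 3 → ℝ) →L[ℝ] (Fin 3 → ℝ)) : (Fin 3 → ℝ) →ₗ[ℝ] (Fin 3 → ℝ))
      = kr * kp * ky / Real.cos (Θ 1) ∧
    IsUnit (LinearMap.det
        ((fderiv ℝ (rotStiffness (Matrix.diagonal ![kr, kp, ky])) Θ :
          (Fin 3 → ℝ) →L[ℝ] (Fin 3 → ℝ)) : (Fin 3 → ℝ) →ₗ[ℝ] (Fin 3 → ℝ))) := by
  have hcpos : 0 < Real.cos (Θ 1) :=
    Real.cos_pos_of_mem_Ioo ⟨(abs_lt.mp hp).1, (abs_lt.mp hp).2⟩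
  have hc : Real.cos (Θ 1) ≠ 0 := ne_of_gt hcpos
  have hF := rot_hasFDerivAt kr kp ky Θ hc
  have hd : LinearMap.det
      ((fderiv ℝ (rotStiffness (Matrix.diagonal ![kr, kp, ky])) Θ :
        (Fin 3 → ℝ) →L[ℝ] (Fin 3 → ℝ)) : (Fin 3 → ℝ) →ₗ[ℝ] (Fin 3 → ℝ))
      = kr * kp * ky / Real.cos (Θ 1) := by
    rw [hF.fderiv, LinearMap.coe_toContinuousLinearMap, LinearMap.det_toLin',
      Matrix.det_fin_three]
    simp [Jm]
    field_simp
    ring_nf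
    simp only [Real.sin_sq]
    ring
  refine ⟨hd, ?_⟩
  rw [hd]
  exact isUnit_iff_ne_zero.mpr (ne_of_gt (div_pos (by positivity) hcpos))
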